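/- arXiv:1902.06572 — 4 statements merged into one kernel-verified Lean document; each statement's English description precedes it below -/
import Mathlib

section
/- Let C be a small category with binary products and let I be an object of C. The exponentiation functor (−)^{y(I)} on the category of type-valued presheaves on C, i.e. the functor exp (yoneda.obj I) : (Cᵒᵖ ⥤ Type) ⥤ (Cᵒᵖ ⥤ Type) given by the cartesian closed structure, has a right adjoint (equivalently, it is a left adjoint, hence preserves all colimits). -/
open CategoryTheory CategoryTheory.Limits MonoidalCategory

noncomputable section ExpYonedaAux

variable {C : Type} [SmallCategory C] [HasBinaryProducts C] (I : C)

/-- Precomposition with `I ⨯ -`. -/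
abbrev expYonedaAux.P : (Cᵒᵖ ⥤ Type) ⥤ (Cᵒᵖ ⥤ Type) :=
  (Functor.whiskeringLeft Cᵒᵖ Cᵒᵖ Type).obj (prod.functor.obj I).op

lemma expYonedaAux.hT (X : Cᵒᵖ ⥤ Type) {c d : Cᵒᵖ} (g : c ⟶ d) (p : (c.unop ⟶ I) × X.obj c) :
    ((tensorLeft (yoneda.obj I)).obj X).map g p = (g.unop ≫ p.1, X.map g p.2) := rfl

/-- The product-with-`y(I)` functor is left adjoint to precomposition with `I ⨯ -`. -/
def expYonedaAux.adj : tensorLeft (yoneda.obj I) ⊣ expYonedaAux.P I :=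
  Adjunction.mkOfHomEquiv
  { homEquiv := fun X Y =>
    { toFun := fun α =>
      { app := fun c => TypeCat.ofHom fun x => α.app (Opposite.op (I ⨯ c.unop))
          ((⟨prod.fst, X.map (prod.snd (X := I)).op x⟩ : (I ⨯ c.unop ⟶ I) × _))
        naturality := fun c d g => by
          ext x
          have h1 := types_congr_hom (α.naturality ((prod.map (𝟙 I) g.unop).op))
            ((⟨prod.fst (X := I), X.map (prod.snd (X := I) (Y := c.unop)).op x⟩ :
              (I ⨯ c.unop ⟶ I) × _))
          refine Eq.trans ?_ h1
          change α.app (Opposite.op (I ⨯ d.unop))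
              (prod.fst, X.map (prod.snd (X := I) (Y := d.unop)).op (X.map g x)) =
            α.app _ (((tensorLeft (yoneda.obj I)).obj X).map ((prod.map (𝟙 I) g.unop).op)
              ((prod.fst, X.map (prod.snd (X := I) (Y := c.unop)).op x) : (I ⨯ c.unop ⟶ I) × _))
          rw [expYonedaAux.hT]
          have e1 : (prod.map (𝟙 I) g.unop).op.unop ≫ prod.fst = (prod.fst : I ⨯ d.unop ⟶ I) := by
            simp
          have e2 : X.map (prod.map (𝟙 I) g.unop).op (X.map (prod.snd (X := I) (Y := c.unop)).op x) =
              X.map (prod.snd (X := I) (Y := d.unop)).op (X.map g x) := by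
            have e3 : (prod.snd (X := I) (Y := c.unop)).op ≫ (prod.map (𝟙 I) g.unop).op =
                g ≫ (prod.snd (X := I) (Y := d.unop)).op := by
              apply Quiver.Hom.unop_inj
              simp
            rw [← FunctorToTypes.map_comp_apply, ← FunctorToTypes.map_comp_apply, e3]
          rw [e1, e2] }
      invFun := fun β =>
      { app := fun c => TypeCat.ofHom fun (p : (c.unop ⟶ I) × X.obj c) =>
          Y.map (prod.lift p.1 (𝟙 c.unop)).op (β.app c p.2)
        naturality := fun c d g => by
          ext p
          obtain ⟨f, x⟩ := p
          change Y.map (prod.lift (g.unop ≫ f) (𝟙 d.unop)).op (β.app d (X.map g x)) =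
            Y.map g (Y.map (prod.lift f (𝟙 c.unop)).op (β.app c x))
          have h1 := types_congr_hom (β.naturality g) x
          change β.app d (X.map g x) = Y.map ((prod.map (𝟙 I) g.unop).op) (β.app c x) at h1
          rw [h1]
          suffices hs : ∀ b : Y.obj (Opposite.op (I ⨯ c.unop)),
              Y.map (prod.lift (g.unop ≫ f) (𝟙 d.unop)).op (Y.map (prod.map (𝟙 I) g.unop).op b) =
                Y.map g (Y.map (prod.lift f (𝟙 c.unop)).op b) from hs _
          intro b
          rw [← FunctorToTypes.map_comp_apply]
          have h3 : (prod.lift (g.unop ≫ f) (𝟙 d.unop) ≫ prod.map (𝟙 I) g.unop)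
              = (g.unop ≫ prod.lift f (𝟙 c.unop)) := by
            apply Limits.prod.hom_ext <;> simp
          rw [← op_comp, h3, ← FunctorToTypes.map_comp_apply]
          rfl }
      left_inv := fun α => by
        ext c p
        obtain ⟨f, x⟩ := p
        change Y.map (prod.lift f (𝟙 c.unop)).op (α.app (Opposite.op (I ⨯ c.unop))
          (prod.fst, X.map (prod.snd (X := I) (Y := c.unop)).op x)) = α.app c (f, x)
        have h1 := types_congr_hom (α.naturality ((prod.lift f (𝟙 c.unop)).op))
          ((⟨prod.fst (X := I), X.map (prod.snd (X := I) (Y := c.unop)).op x⟩ :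
            (I ⨯ c.unop ⟶ I) × _))
        refine h1.symm.trans ?_
        change α.app c (((tensorLeft (yoneda.obj I)).obj X).map ((prod.lift f (𝟙 c.unop)).op)
          ((prod.fst, X.map (prod.snd (X := I) (Y := c.unop)).op x) : (I ⨯ c.unop ⟶ I) × _)) = _
        rw [expYonedaAux.hT]
        congr 1
        refine Prod.ext ?_ ?_
        · exact prod.lift_fst (f : c.unop ⟶ I) _
        · rw [← FunctorToTypes.map_comp_apply, ← op_comp,
            prod.lift_snd (f : c.unop ⟶ I), op_id, FunctorToTypes.map_id_apply]
      right_inv := fun β => by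
        ext c x
        change Y.map (prod.lift prod.fst (𝟙 (I ⨯ c.unop))).op (β.app (Opposite.op (I ⨯ c.unop))
          (X.map (prod.snd (X := I) (Y := c.unop)).op x)) = β.app c x
        have h1 := types_congr_hom (β.naturality ((prod.snd (X := I) (Y := c.unop)).op)) x
        rw [← types_comp_apply (X.map _) (β.app _), h1, types_comp_apply]
        suffices hs : ∀ b : Y.obj (Opposite.op (I ⨯ c.unop)),
            Y.map (prod.lift prod.fst (𝟙 (I ⨯ c.unop))).op
              (Y.map (prod.map (𝟙 I) (prod.snd (X := I) (Y := c.unop))).op b) = b from hs _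
        intro b
        rw [← FunctorToTypes.map_comp_apply, ← op_comp]
        simp }
    homEquiv_naturality_left_symm := fun {X X' Y} f g => by
      ext c p
      rfl
    homEquiv_naturality_right := fun {X Y Y'} f g => by
      ext c x
      rfl }

end ExpYonedaAux

/-- For a small category `C` with binary products and an object `I` of `C`,
the exponentiation functor `exp (yoneda.obj I)` on presheaves `Cᵒᵖ ⥤ Type` has a right
adjoint, i.e. it is a left adjoint functor. -/
theorem exp_yoneda_isLeftAdjoint
    {C : Type} [SmallCategory C] [HasBinaryProducts C] (I : C) :
    (ihom (yoneda.obj I) : (Cᵒᵖ ⥤ Type) ⥤ (Cᵒᵖ ⥤ Type)).IsLeftAdjoint := by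
  have adj1 := expYonedaAux.adj I
  have adj2 := ihom.adjunction (yoneda.obj I)
  have iso : expYonedaAux.P I ≅ ihom (yoneda.obj I) := adj1.rightAdjointUniq adj2
  have adj3 := (prod.functor.obj I).op.ranAdjunction Type
  exact ⟨_, ⟨adj3.ofNatIsoLeft iso⟩⟩
end

section
/- Let C be a small category with binary products, I an object of C, and S a type. The canonical morphism from the constant presheaf Δ(S) on Cᵒᵖ with value S to the exponential Δ(S)^{y(I)} — namely the exponential transpose of the first projection Δ(S) ⨯ y(I) ⟶ Δ(S) — is an isomorphism of presheaves. In particular, the exponential of a constant presheaf by a representable presheaf is again (isomorphic to) that constant presheaf. -/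
open CategoryTheory CategoryTheory.Limits Opposite MonoidalCategory

section Aux

variable {C : Type} [SmallCategory C] [HasBinaryProducts C] {I : C} {S : Type}
  {T : Cᵒᵖ ⥤ Type}

/-- The inverse construction: from a map `y(I) ⊗ T ⟶ Δ S`, produce `T ⟶ Δ S`
by evaluating at `I ⨯ c` with first component `prod.fst`. -/
noncomputable def constBack (α : yoneda.obj I ⊗ T ⟶ (Functor.const Cᵒᵖ).obj S) :
    T ⟶ (Functor.const Cᵒᵖ).obj S where
  app c := TypeCat.ofHom fun x => α.app (op (I ⨯ c.unop))
    (prod.fst, T.map (prod.snd : I ⨯ c.unop ⟶ c.unop).op x)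
  naturality c c' f := by
    ext x
    have h := ConcreteCategory.congr_hom (α.naturality (prod.map (𝟙 I) f.unop).op)
      (show (yoneda.obj I).obj _ × T.obj _ from (prod.fst, T.map (prod.snd : I ⨯ c.unop ⟶ c.unop).op x))
    replace h : α.app (op (I ⨯ c'.unop))
        (prod.map (𝟙 I) f.unop ≫ prod.fst,
          T.map (prod.map (𝟙 I) f.unop).op (T.map (prod.snd : I ⨯ c.unop ⟶ c.unop).op x))
        = α.app (op (I ⨯ c.unop)) (prod.fst, T.map (prod.snd : I ⨯ c.unop ⟶ c.unop).op x) := h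
    have e1 : (prod.map (𝟙 I) f.unop ≫ prod.fst : I ⨯ c'.unop ⟶ I) = prod.fst := by simp
    have e2 : T.map (prod.map (𝟙 I) f.unop).op (T.map (prod.snd : I ⨯ c.unop ⟶ c.unop).op x)
        = T.map (prod.snd : I ⨯ c'.unop ⟶ c'.unop).op (T.map f x) := by
      rw [← FunctorToTypes.map_comp_apply, ← FunctorToTypes.map_comp_apply, ← op_comp]
      have : (f ≫ (prod.snd : I ⨯ c'.unop ⟶ c'.unop).op)
          = ((prod.snd : I ⨯ c'.unop ⟶ c'.unop) ≫ f.unop).op := rfl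
      rw [this]
      simp
    rw [e1, e2] at h
    exact h

lemma snd_comp_constBack (α : yoneda.obj I ⊗ T ⟶ (Functor.const Cᵒᵖ).obj S) :
    CartesianMonoidalCategory.snd (yoneda.obj I) T ≫ constBack α = α := by
  ext c p
  obtain ⟨f, x⟩ := p
  have h := ConcreteCategory.congr_hom (α.naturality (prod.lift f (𝟙 c.unop)).op)
    (show (yoneda.obj I).obj _ × T.obj _ from (prod.fst, T.map (prod.snd : I ⨯ c.unop ⟶ c.unop).op x))
  replace h : α.app c
      (prod.lift f (𝟙 c.unop) ≫ prod.fst,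
        T.map (prod.lift f (𝟙 c.unop)).op (T.map (prod.snd : I ⨯ c.unop ⟶ c.unop).op x))
      = α.app (op (I ⨯ c.unop)) (prod.fst, T.map (prod.snd : I ⨯ c.unop ⟶ c.unop).op x) := h
  have e1 : (prod.lift f (𝟙 c.unop) ≫ prod.fst) = f := prod.lift_fst _ _
  have e2 : T.map (prod.lift f (𝟙 c.unop)).op
      (T.map (prod.snd : I ⨯ c.unop ⟶ c.unop).op x) = x := by
    rw [← FunctorToTypes.map_comp_apply, ← op_comp, prod.lift_snd f (𝟙 c.unop)]
    simp
  rw [e1, e2] at h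
  exact h.symm

lemma constBack_snd_comp (β : T ⟶ (Functor.const Cᵒᵖ).obj S) :
    constBack (CartesianMonoidalCategory.snd (yoneda.obj I) T ≫ β) = β := by
  ext c x
  have h := ConcreteCategory.congr_hom (β.naturality (prod.snd : I ⨯ c.unop ⟶ c.unop).op) x
  exact h

lemma snd_comp_bijective :
    Function.Bijective (fun g : (T ⟶ (Functor.const Cᵒᵖ).obj S) =>
      CartesianMonoidalCategory.snd (yoneda.obj I) T ≫ g) :=
  Function.bijective_iff_has_inverse.2
    ⟨constBack, constBack_snd_comp, snd_comp_constBack⟩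

end Aux

/-- Let `C` be a small category with binary products, `I : C`, and `S` a type.
The canonical morphism from the constant presheaf `Δ(S)` to the exponential `Δ(S) ^ y(I)`,
namely the exponential transpose of the projection `Δ(S) ⨯ y(I) ⟶ Δ(S)` (written here with
the chosen product `y(I) ⊗ Δ(S)` of the cartesian closed structure on presheaves), is an
isomorphism of presheaves: the exponential of a constant presheaf by a representable presheaf
is again that constant presheaf. -/
theorem const_to_exp_yoneda_isIso
    {C : Type} [SmallCategory C] [HasBinaryProducts C] (I : C) (S : Type) :
    IsIso (MonoidalClosed.curry
        (CartesianMonoidalCategory.snd (yoneda.obj I) ((Functor.const Cᵒᵖ).obj S)) :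
      (Functor.const Cᵒᵖ).obj S ⟶ (ihom (yoneda.obj I)).obj ((Functor.const Cᵒᵖ).obj S)) := by
  apply isIso_of_yoneda_map_bijective
  intro T
  have key : (fun g : (T ⟶ (Functor.const Cᵒᵖ).obj S) =>
        g ≫ MonoidalClosed.curry
          (CartesianMonoidalCategory.snd (yoneda.obj I) ((Functor.const Cᵒᵖ).obj S)))
      = (MonoidalClosed.curry ∘ fun g =>
          CartesianMonoidalCategory.snd (yoneda.obj I) T ≫ g) := by
    funext g
    dsimp
    rw [← MonoidalClosed.curry_natural_left, CartesianMonoidalCategory.whiskerLeft_snd]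
  have curryBij : Function.Bijective
      (MonoidalClosed.curry : (yoneda.obj I ⊗ T ⟶ (Functor.const Cᵒᵖ).obj S) →
        (T ⟶ (ihom (yoneda.obj I)).obj ((Functor.const Cᵒᵖ).obj S))) :=
    Function.bijective_iff_has_inverse.2
      ⟨MonoidalClosed.uncurry, MonoidalClosed.uncurry_curry, MonoidalClosed.curry_uncurry⟩
  rw [key]
  exact curryBij.comp snd_comp_bijective
end

section
/- A morphism p : X ⟶ Y of simplicial sets has the right lifting property with respect to every monomorphism of simplicial sets if and only if it has the right lifting property with respect to every boundary inclusion ∂Δ[n] ⟶ Δ[n] for all n ≥ 0. -/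
open CategoryTheory Simplicial Opposite GrothendieckTopology SSet

namespace RLPAux

/-- A monotone surjection `Fin (a+1) → Fin (b+1)` admits a monotone section through any
prescribed point `j`. -/
lemma exists_orderHom_section {a b : ℕ} (g : Fin (a + 1) →o Fin (b + 1))
    (hg : Function.Surjective g) (j : Fin (a + 1)) :
    ∃ t : Fin (b + 1) →o Fin (a + 1), (∀ k, g (t k) = k) ∧ t (g j) = j := by
  classical
  have ne : ∀ k : Fin (b + 1), (Finset.univ.filter (fun i => g i = k)).Nonempty := by
    intro k; obtain ⟨i, hi⟩ := hg k; exact ⟨i, by simp [hi]⟩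
  set M : Fin (b + 1) → Fin (a + 1) :=
    fun k => (Finset.univ.filter (fun i => g i = k)).max' (ne k) with hM
  set m : Fin (b + 1) → Fin (a + 1) :=
    fun k => (Finset.univ.filter (fun i => g i = k)).min' (ne k) with hm
  have hgM : ∀ k, g (M k) = k := by
    intro k
    have := (Finset.univ.filter (fun i => g i = k)).max'_mem (ne k)
    simpa using this
  have hgm : ∀ k, g (m k) = k := by
    intro k
    have := (Finset.univ.filter (fun i => g i = k)).min'_mem (ne k)
    simpa using this
  have hMmono : Monotone M := by
    intro k k' hk
    by_contra hc
    push_neg at hc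
    have h1 : g (M k') ≤ g (M k) := g.monotone hc.le
    rw [hgM, hgM] at h1
    have : k = k' := le_antisymm hk h1
    subst this
    exact absurd rfl hc.ne
  have hmmono : Monotone m := by
    intro k k' hk
    by_contra hc
    push_neg at hc
    have h1 : g (m k') ≤ g (m k) := g.monotone hc.le
    rw [hgm, hgm] at h1
    have : k = k' := le_antisymm hk h1
    subst this
    exact absurd rfl hc.ne
  have hMlt : ∀ k, k < g j → M k < j := by
    intro k hk
    by_contra hc
    push_neg at hc
    have := g.monotone hc
    rw [hgM] at this
    exact absurd (lt_of_lt_of_le hk this) (lt_irrefl _)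
  have hmgt : ∀ k, g j < k → j < m k := by
    intro k hk
    by_contra hc
    push_neg at hc
    have := g.monotone hc
    rw [hgm] at this
    exact absurd (lt_of_lt_of_le hk this) (lt_irrefl _)
  set t : Fin (b + 1) → Fin (a + 1) :=
    fun k => if k < g j then M k else if k = g j then j else m k with ht
  have htval : ∀ k, g (t k) = k := by
    intro k
    rw [ht]
    dsimp only
    split_ifs with h1 h2
    · exact hgM k
    · rw [h2]
    · exact hgm k
  have htj : t (g j) = j := by
    rw [ht]; simp
  have htmono : Monotone t := by
    intro k k' hk
    rw [ht]; dsimp only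
    rcases lt_trichotomy k (g j) with h1 | h1 | h1 <;>
      rcases lt_trichotomy k' (g j) with h2 | h2 | h2
    · rw [if_pos h1, if_pos h2]; exact hMmono hk
    · rw [if_pos h1, if_neg (by rw [h2]; exact lt_irrefl _), if_pos h2]
      exact (hMlt k h1).le
    · rw [if_pos h1, if_neg (by exact asymm h2), if_neg (by exact h2.ne')]
      exact (hMlt k h1).le.trans (hmgt k' h2).le
    · exact absurd (lt_of_le_of_lt hk h2) (by rw [h1]; exact lt_irrefl _)
    · rw [if_neg (by rw [h1]; exact lt_irrefl _), if_pos h1,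
        if_neg (by rw [h2]; exact lt_irrefl _), if_pos h2]
    · rw [if_neg (by rw [h1]; exact lt_irrefl _), if_pos h1,
        if_neg (asymm h2), if_neg h2.ne']
      exact (hmgt k' h2).le
    · exact absurd (lt_of_lt_of_le h1 (hk.trans h2.le)) (lt_irrefl _)
    · exact absurd (lt_of_lt_of_le h1 (hk.trans h2.le)) (lt_irrefl _)
    · rw [if_neg (asymm h1), if_neg h1.ne', if_neg (asymm h2), if_neg h2.ne']
      exact hmmono hk
  exact ⟨⟨t, htmono⟩, htval, htj⟩



universe u

variable {A B X Y : SSet.{u}}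

/-- A partial lift for the lifting problem `(f, g)` of `i` against `p`. -/
structure PL (i : A ⟶ B) (p : X ⟶ Y) (f : A ⟶ X) (g : B ⟶ Y) where
  S : Subfunctor B
  l : ∀ ⦃m : SimplexCategoryᵒᵖ⦄ (z : B.obj m), z ∈ S.obj m → X.obj m
  nat : ∀ {m m' : SimplexCategoryᵒᵖ} (φ : m ⟶ m') (z : B.obj m) (hz : z ∈ S.obj m),
    l (B.map φ z) (S.map φ hz) = X.map φ (l z hz)
  hA : ∀ (m : SimplexCategoryᵒᵖ) (a : A.obj m), i.app m a ∈ S.obj m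
  comm_f : ∀ (m : SimplexCategoryᵒᵖ) (a : A.obj m), l (i.app m a) (hA m a) = f.app m a
  comm_p : ∀ (m : SimplexCategoryᵒᵖ) (z : B.obj m) (hz : z ∈ S.obj m),
    p.app m (l z hz) = g.app m z

variable {i : A ⟶ B} {p : X ⟶ Y} {f : A ⟶ X} {g : B ⟶ Y}

instance : Preorder (PL i p f g) where
  le P Q := ∃ h : P.S ≤ Q.S, ∀ (m : SimplexCategoryᵒᵖ) (z : B.obj m) (hz : z ∈ P.S.obj m),
    Q.l z (h m hz) = P.l z hz
  le_refl P := ⟨le_refl _, fun _ _ _ => rfl⟩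
  le_trans P Q R := by
    rintro ⟨h1, e1⟩ ⟨h2, e2⟩
    exact ⟨h1.trans h2, fun m z hz => (e2 m z (h1 m hz)).trans (e1 m z hz)⟩

lemma le_val {P Q : PL i p f g} (h : P ≤ Q) {m : SimplexCategoryᵒᵖ} (z : B.obj m)
    (hzP : z ∈ P.S.obj m) (hzQ : z ∈ Q.S.obj m) : Q.l z hzQ = P.l z hzP := by
  obtain ⟨h1, h2⟩ := h
  exact h2 m z hzP

/-- The bottom partial lift, defined on the image of `i`. -/
noncomputable def bot (i : A ⟶ B) (p : X ⟶ Y) (f : A ⟶ X) (g : B ⟶ Y) [Mono i]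
    (sq : CommSq f i p g) : PL i p f g := by
  have hinj : ∀ m, Function.Injective (i.app m) := fun m =>
    (mono_iff_injective _).mp ((NatTrans.mono_iff_mono_app i).mp inferInstance m)
  refine
  { S := Subfunctor.range i
    l := fun m z hz => f.app m hz.choose
    nat := ?_
    hA := fun m a => ⟨a, rfl⟩
    comm_f := ?_
    comm_p := ?_ }
  · intro m m' φ z hz
    have hz' : B.map φ z ∈ (Subfunctor.range i).obj m' := (Subfunctor.range i).map φ hz
    show f.app m' (Exists.choose hz') = X.map φ (f.app m (Exists.choose hz))
    have h1 : i.app m hz.choose = z := hz.choose_spec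
    have h2 : i.app m' hz'.choose = B.map φ z := hz'.choose_spec
    have h3 : i.app m' (A.map φ hz.choose) = B.map φ z :=
      (NatTrans.naturality_apply i φ hz.choose).trans (congrArg (B.map φ) h1)
    have h4 : hz'.choose = A.map φ hz.choose := hinj m' (h2.trans h3.symm)
    rw [h4]
    exact NatTrans.naturality_apply f φ hz.choose
  · intro m a
    have hz : i.app m a ∈ (Subfunctor.range i).obj m := ⟨a, rfl⟩
    show f.app m (Exists.choose hz) = f.app m a
    exact congrArg (f.app m) (hinj m hz.choose_spec)
  · intro m z hz
    show p.app m (f.app m (Exists.choose hz)) = g.app m z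
    have h1 : i.app m hz.choose = z := hz.choose_spec
    have h2 : p.app m (f.app m hz.choose) = g.app m (i.app m hz.choose) :=
      ConcreteCategory.congr_hom (NatTrans.congr_app sq.w m) hz.choose
    rw [h2, h1]

lemma chain_coherent {c : Set (PL i p f g)} (hc : IsChain (· ≤ ·) c)
    {P Q : PL i p f g} (hP : P ∈ c) (hQ : Q ∈ c)
    {m : SimplexCategoryᵒᵖ} {z : B.obj m} (hzP : z ∈ P.S.obj m) (hzQ : z ∈ Q.S.obj m) :
    P.l z hzP = Q.l z hzQ := by
  rcases eq_or_ne P Q with rfl | hne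
  · rfl
  rcases hc hP hQ hne with h | h
  · exact (le_val h z hzP hzQ).symm
  · exact le_val h z hzQ hzP

/-- The upper bound of a nonempty chain of partial lifts. -/
noncomputable def chainSup (c : Set (PL i p f g)) (hc : IsChain (· ≤ ·) c)
    (P₀ : PL i p f g) (hP₀ : P₀ ∈ c) : PL i p f g where
  S := ⟨fun m => {z | ∃ P ∈ c, z ∈ P.S.obj m}, by
    rintro m m' φ z ⟨P, hPc, hz⟩
    exact ⟨P, hPc, P.S.map φ hz⟩⟩
  l := fun m z hz => hz.choose.l z hz.choose_spec.2
  nat := by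
    intro m m' φ z hz
    obtain ⟨P, hPc, hzP⟩ := id hz
    have hz' : ∃ P ∈ c, B.map φ z ∈ P.S.obj m' := ⟨P, hPc, P.S.map φ hzP⟩
    show hz'.choose.l (B.map φ z) hz'.choose_spec.2 = X.map φ (hz.choose.l z hz.choose_spec.2)
    calc hz'.choose.l (B.map φ z) hz'.choose_spec.2
        = P.l (B.map φ z) (P.S.map φ hzP) :=
          chain_coherent hc hz'.choose_spec.1 hPc _ _
      _ = X.map φ (P.l z hzP) := P.nat φ z hzP
      _ = X.map φ (hz.choose.l z hz.choose_spec.2) := by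
          rw [chain_coherent hc hz.choose_spec.1 hPc hz.choose_spec.2 hzP]
  hA := fun m a => ⟨P₀, hP₀, P₀.hA m a⟩
  comm_f := by
    intro m a
    have hz : ∃ P ∈ c, i.app m a ∈ P.S.obj m := ⟨P₀, hP₀, P₀.hA m a⟩
    show hz.choose.l (i.app m a) hz.choose_spec.2 = f.app m a
    rw [chain_coherent hc hz.choose_spec.1 hP₀ hz.choose_spec.2 (P₀.hA m a)]
    exact P₀.comm_f m a
  comm_p := by
    intro m z hz
    exact hz.choose.comm_p m z hz.choose_spec.2

lemma le_chainSup (c : Set (PL i p f g)) (hc : IsChain (· ≤ ·) c)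
    (P₀ : PL i p f g) (hP₀ : P₀ ∈ c) {P : PL i p f g} (hP : P ∈ c) :
    P ≤ chainSup c hc P₀ hP₀ := by
  refine ⟨fun m z hz => ⟨P, hP, hz⟩, fun m z hz => ?_⟩
  have hz' : ∃ Q ∈ c, z ∈ Q.S.obj m := ⟨P, hP, hz⟩
  show hz'.choose.l z hz'.choose_spec.2 = P.l z hz
  exact chain_coherent hc hz'.choose_spec.1 hP _ hz

lemma exists_maximal [Mono i] (sq : CommSq f i p g) :
    ∃ P : PL i p f g, IsMax P := by
  apply zorn_le
  intro c hc
  rcases c.eq_empty_or_nonempty with rfl | ⟨P₀, hP₀⟩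
  · exact ⟨bot i p f g sq, fun P hP => absurd hP (Set.notMem_empty P)⟩
  · exact ⟨chainSup c hc P₀ hP₀, fun P hP => le_chainSup c hc P₀ hP₀ hP⟩


lemma l_congr (P : PL i p f g) {m : SimplexCategoryᵒᵖ} {z z' : B.obj m} (e : z = z')
    (hz : z ∈ P.S.obj m) (hz' : z' ∈ P.S.obj m) : P.l z hz = P.l z' hz' := by
  subst e; rfl

/-- The key lemma: `p` has the RLP against any mono if it has it against all boundary
inclusions. -/
lemma key (i : A ⟶ B) [Mono i] (p : X ⟶ Y)
    (hB : ∀ n : ℕ, HasLiftingProperty ((boundary n).ι) p) :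
    HasLiftingProperty i p := by
  classical
  constructor
  intro f g sq
  obtain ⟨P, hPmax⟩ := exists_maximal (i := i) (p := p) sq
  have htop : ∀ (m : SimplexCategoryᵒᵖ) (z : B.obj m), z ∈ P.S.obj m := by
    by_contra hcon
    push_neg at hcon
    obtain ⟨m₀, z₀, hz₀⟩ := hcon
    have hex : ∃ n : ℕ, ∃ z : B.obj (op ⦋n⦌), z ∉ P.S.obj (op ⦋n⦌) := by
      refine ⟨m₀.unop.len, ?_⟩
      rw [show (op ⦋m₀.unop.len⦌ : SimplexCategoryᵒᵖ) = m₀ from by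
        rw [SimplexCategory.mk_len]]
      exact ⟨z₀, hz₀⟩
    obtain ⟨n, ⟨x, hx⟩, hmin0⟩ : ∃ n : ℕ, (∃ z : B.obj (op ⦋n⦌), z ∉ P.S.obj (op ⦋n⦌)) ∧
        ∀ k, k < n → ∀ z : B.obj (op ⦋k⦌), z ∈ P.S.obj (op ⦋k⦌) := by
      refine ⟨Nat.find hex, Nat.find_spec hex, ?_⟩
      intro k hk z
      by_contra hz
      exact Nat.find_min hex hk ⟨z, hz⟩
    -- every simplex of dimension < n belongs to S
    have hmin : ∀ (m' : SimplexCategoryᵒᵖ), m'.unop.len < n → ∀ z : B.obj m',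
        z ∈ P.S.obj m' := by
      intro m' hlt z
      have := hmin0 m'.unop.len hlt
      rw [show (op ⦋m'.unop.len⦌ : SimplexCategoryᵒᵖ) = m' from by
        rw [SimplexCategory.mk_len]] at this
      exact this z
    -- non-surjective reparametrizations of x land in S
    have L2 : ∀ (m : SimplexCategoryᵒᵖ) (gg : m.unop ⟶ ⦋n⦌),
        ¬ Function.Surjective gg.toOrderHom → B.map gg.op x ∈ P.S.obj m := by
      intro m gg hgg
      cases n with
      | zero =>
        apply absurd _ hgg
        intro k
        refine ⟨0, ?_⟩
        have hk : (k : ℕ) < 1 := by simpa [SimplexCategory.len_mk] using k.isLt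
        have h0 : (((SimplexCategory.Hom.toOrderHom gg) 0) : ℕ) < 1 := by
          simpa [SimplexCategory.len_mk] using ((SimplexCategory.Hom.toOrderHom gg) 0).isLt
        exact Fin.ext (by omega)
      | succ n' =>
        obtain ⟨j, θ', hθ⟩ := SimplexCategory.eq_comp_δ_of_not_surjective gg hgg
        have h1 : B.map gg.op x = B.map θ'.op (B.map (SimplexCategory.δ j).op x) := by
          rw [hθ, op_comp, FunctorToTypes.map_comp_apply]
        rw [h1]
        exact P.S.map θ'.op (hmin (op ⦋n'⦌) (by simp) _)
    -- x is not fixed by any non-identity endomorphism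
    have L3 : ∀ (h : (⦋n⦌ : SimplexCategory) ⟶ ⦋n⦌), B.map h.op x = x → h = 𝟙 (⦋n⦌ : SimplexCategory) := by
      intro h hh
      by_cases hepi : Function.Surjective h.toOrderHom
      · have : Epi h := SimplexCategory.epi_iff_surjective.mpr hepi
        exact SimplexCategory.eq_id_of_epi h
      · exact absurd (hh ▸ L2 (op ⦋n⦌) h hepi) hx
    -- Eilenberg–Zilber style uniqueness
    have L4 : ∀ (m : SimplexCategoryᵒᵖ) (g₁ g₂ : m.unop ⟶ ⦋n⦌),
        Function.Surjective g₁.toOrderHom → B.map g₁.op x = B.map g₂.op x → g₁ = g₂ := by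
      intro m g₁ g₂ hs he
      apply SimplexCategory.Hom.ext
      apply OrderHom.ext
      funext j
      obtain ⟨t, hts, htj⟩ := exists_orderHom_section g₁.toOrderHom hs j
      set th : (⦋n⦌ : SimplexCategory) ⟶ m.unop := SimplexCategory.Hom.mk t with hth
      have hcomp1 : th ≫ g₁ = 𝟙 (⦋n⦌ : SimplexCategory) := by
        apply SimplexCategory.Hom.ext
        apply OrderHom.ext
        funext k
        exact hts k
      have hcomp : B.map (th ≫ g₂).op x = x := by
        rw [op_comp, FunctorToTypes.map_comp_apply, ← he, ← FunctorToTypes.map_comp_apply,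
          ← op_comp, hcomp1, op_id, FunctorToTypes.map_id_apply]
      have hid := L3 (th ≫ g₂) hcomp
      have h5 := congrArg (fun q : (⦋n⦌ : SimplexCategory) ⟶ ⦋n⦌ => q.toOrderHom (g₁.toOrderHom j)) hid
      simp only [SimplexCategory.comp_toOrderHom, OrderHom.comp_coe, Function.comp_apply,
        SimplexCategory.Hom.toOrderHom_mk] at h5
      rw [show th.toOrderHom = t from rfl, htj] at h5
      exact h5.symm
    -- membership of boundary simplices
    have hmem : ∀ (m : SimplexCategoryᵒᵖ) (α : (∂Δ[n] : SSet.{u}).obj m),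
        B.map ((stdSimplex.objEquiv (n := ⦋n⦌) (m := m)) α.1).op x ∈ P.S.obj m :=
      fun m α => L2 m _ α.2
    -- the map on the boundary
    let a : (∂Δ[n] : SSet.{u}) ⟶ X :=
      { app := fun m => TypeCat.ofHom (fun α => P.l (B.map ((stdSimplex.objEquiv (n := ⦋n⦌) (m := m)) α.1).op x) (hmem m α))
        naturality := by
          intro m m' φ
          ext α
          show P.l (B.map ((stdSimplex.objEquiv (n := ⦋n⦌) (m := m'))
              ((∂Δ[n] : SSet.{u}).map φ α).1).op x) _ = X.map φ _
          have e1 : (stdSimplex.objEquiv (n := ⦋n⦌) (m := m')) ((∂Δ[n] : SSet.{u}).map φ α).1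
              = φ.unop ≫ (stdSimplex.objEquiv (n := ⦋n⦌) (m := m)) α.1 := by
            show (stdSimplex.objEquiv (n := ⦋n⦌) (m := m')) (Δ[n].map φ α.1) = _
            rw [stdSimplex.map_apply, Equiv.apply_symm_apply]
          have e2 : B.map ((stdSimplex.objEquiv (n := ⦋n⦌) (m := m'))
                ((∂Δ[n] : SSet.{u}).map φ α).1).op x
              = B.map φ (B.map ((stdSimplex.objEquiv (n := ⦋n⦌) (m := m)) α.1).op x) := by
            rw [e1, op_comp, Quiver.Hom.op_unop, FunctorToTypes.map_comp_apply]
          exact (l_congr P e2 _ (P.S.map φ (hmem m α))).trans (P.nat φ _ (hmem m α)) }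
    -- the n-simplex x as a map
    let bhat : Δ[n] ⟶ B := (SSet.yonedaEquiv (X := B) (n := ⦋n⦌)).symm x
    have bhat_app : ∀ (m : SimplexCategoryᵒᵖ) (α : Δ[n].obj m),
        bhat.app m α = B.map ((stdSimplex.objEquiv (n := ⦋n⦌) (m := m)) α).op x := fun _ _ => rfl
    have sq2 : CommSq a ((boundary n).ι) p (bhat ≫ g) := by
      constructor
      apply NatTrans.ext
      funext m
      ext α
      exact P.comm_p m _ (hmem m α)
    obtain ⟨L⟩ := ((hB n).sq_hasLift sq2).exists_lift
    -- the candidate values on multiples of x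
    set val : ∀ (m : SimplexCategoryᵒᵖ), (m.unop ⟶ ⦋n⦌) → X.obj m :=
      fun m gg => L.l.app m ((stdSimplex.objEquiv (n := ⦋n⦌) (m := m)).symm gg) with hval
    have K1 : ∀ (m : SimplexCategoryᵒᵖ) (gg : m.unop ⟶ ⦋n⦌)
        (hmemS : B.map gg.op x ∈ P.S.obj m), P.l _ hmemS = val m gg := by
      intro m gg hmemS
      have hns : ¬ Function.Surjective gg.toOrderHom := by
        intro hs
        have hepi : Epi gg := SimplexCategory.epi_iff_surjective.mpr hs
        have hsplit : IsSplitEpi gg := isSplitEpi_of_epi gg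
        obtain ⟨s⟩ := hsplit.exists_splitEpi
        have ex : B.map s.section_.op (B.map gg.op x) = x := by
          rw [← FunctorToTypes.map_comp_apply, ← op_comp, s.id, op_id,
            FunctorToTypes.map_id_apply]
        exact hx (ex ▸ P.S.map s.section_.op hmemS)
      have hfac := ConcreteCategory.congr_hom (congr_app L.fac_left m)
        (⟨(stdSimplex.objEquiv (n := ⦋n⦌) (m := m)).symm gg, hns⟩ : (∂Δ[n] : SSet.{u}).obj m)
      refine (l_congr P ?_ hmemS _).trans hfac.symm
      rw [Equiv.apply_symm_apply]
    have K2 : ∀ (m : SimplexCategoryᵒᵖ) (g₁ g₂ : m.unop ⟶ ⦋n⦌),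
        B.map g₁.op x = B.map g₂.op x → val m g₁ = val m g₂ := by
      intro m g₁ g₂ he
      by_cases h1 : B.map g₁.op x ∈ P.S.obj m
      · have h2 : B.map g₂.op x ∈ P.S.obj m := he ▸ h1
        rw [← K1 m g₁ h1, ← K1 m g₂ h2]
        exact l_congr P he h1 h2
      · by_cases hs : Function.Surjective g₁.toOrderHom
        · rw [L4 m g₁ g₂ hs he]
        · exact absurd (L2 m g₁ hs) h1
    have valnat : ∀ (m m' : SimplexCategoryᵒᵖ) (φ : m ⟶ m') (gg : m.unop ⟶ ⦋n⦌),
        val m' (φ.unop ≫ gg) = X.map φ (val m gg) := by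
      intro m m' φ gg
      have h := NatTrans.naturality_apply L.l φ ((stdSimplex.objEquiv (n := ⦋n⦌) (m := m)).symm gg)
      rw [stdSimplex.map_apply, Equiv.apply_symm_apply] at h
      exact h
    -- the extended subpresheaf
    set S' : Subfunctor B :=
      ⟨fun m => P.S.obj m ∪ {z | ∃ gg : m.unop ⟶ ⦋n⦌, z = B.map gg.op x}, by
        rintro m m' φ z (hz | ⟨gg, rfl⟩)
        · exact Or.inl (P.S.map φ hz)
        · exact Or.inr ⟨φ.unop ≫ gg, by
            rw [op_comp, Quiver.Hom.op_unop, FunctorToTypes.map_comp_apply]⟩⟩ with hS'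
    have hm_or : ∀ (m : SimplexCategoryᵒᵖ) (z : B.obj m), z ∈ S'.obj m →
        z ∈ P.S.obj m ∨ ∃ gg : m.unop ⟶ ⦋n⦌, z = B.map gg.op x := fun m z hz => hz
    set l' : ∀ ⦃m : SimplexCategoryᵒᵖ⦄ (z : B.obj m), z ∈ S'.obj m → X.obj m :=
      fun m z hz =>
        if h : z ∈ P.S.obj m then P.l z h
        else val m ((hm_or m z hz).resolve_left h).choose with hl'
    have K0 : ∀ (m : SimplexCategoryᵒᵖ) (z : B.obj m) (hz : z ∈ S'.obj m)
        (h : z ∈ P.S.obj m), l' z hz = P.l z h := by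
      intro m z hz h
      rw [hl']
      exact dif_pos h
    have K3 : ∀ (m : SimplexCategoryᵒᵖ) (z : B.obj m) (hz : z ∈ S'.obj m)
        (gg : m.unop ⟶ ⦋n⦌), z = B.map gg.op x → l' z hz = val m gg := by
      intro m z hz gg hgg
      by_cases h : z ∈ P.S.obj m
      · rw [K0 m z hz h]
        subst hgg
        exact K1 m gg h
      · rw [hl']
        dsimp only
        rw [dif_neg h]
        exact K2 m _ gg (((hm_or m z hz).resolve_left h).choose_spec.symm.trans hgg)
    -- the extended partial lift
    set Q : PL i p f g :=
      { S := S'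
        l := l'
        nat := by
          intro m m' φ z hz
          by_cases h : z ∈ P.S.obj m
          · rw [K0 m z hz h, K0 m' (B.map φ z) (S'.map φ hz) (P.S.map φ h)]
            exact P.nat φ z h
          · obtain ⟨gg, hgg⟩ := (hm_or m z hz).resolve_left h
            rw [K3 m z hz gg hgg,
              K3 m' (B.map φ z) (S'.map φ hz) (φ.unop ≫ gg) (by
                rw [hgg, op_comp, Quiver.Hom.op_unop, FunctorToTypes.map_comp_apply])]
            exact valnat m m' φ gg
        hA := fun m a => Or.inl (P.hA m a)
        comm_f := by
          intro m a
          rw [K0 m _ (Or.inl (P.hA m a)) (P.hA m a)]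
          exact P.comm_f m a
        comm_p := by
          intro m z hz
          by_cases h : z ∈ P.S.obj m
          · rw [K0 m z hz h]
            exact P.comm_p m z h
          · obtain ⟨gg, hgg⟩ := (hm_or m z hz).resolve_left h
            rw [K3 m z hz gg hgg]
            have h2 := ConcreteCategory.congr_hom (congr_app L.fac_right m)
              ((stdSimplex.objEquiv (n := ⦋n⦌) (m := m)).symm gg)
            have h3 : bhat.app m ((stdSimplex.objEquiv (n := ⦋n⦌) (m := m)).symm gg)
                = B.map gg.op x := by
              rw [bhat_app, Equiv.apply_symm_apply]
            refine h2.trans ?_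
            show g.app m (bhat.app m ((stdSimplex.objEquiv (n := ⦋n⦌) (m := m)).symm gg)) = g.app m z
            rw [h3, ← hgg] } with hQ
    have hle : P ≤ Q := ⟨fun m z hz => Or.inl hz, fun m z hz => K0 m z (Or.inl hz) hz⟩
    have hxS' : x ∈ S'.obj (op ⦋n⦌) := Or.inr ⟨𝟙 (⦋n⦌ : SimplexCategory), by simp⟩
    obtain ⟨hS, _⟩ := hPmax hle
    exact hx (hS (op ⦋n⦌) hxS')
  -- the total lift
  refine ⟨⟨⟨{ app := fun m => TypeCat.ofHom (fun z => P.l z (htop m z)), naturality := ?_ }, ?_, ?_⟩⟩⟩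
  · intro m m' φ
    ext z
    exact P.nat φ z (htop m z)
  · apply NatTrans.ext
    funext m
    ext a
    exact P.comm_f m a
  · apply NatTrans.ext
    funext m
    ext z
    exact P.comm_p m z (htop m z)


end RLPAux

open CategoryTheory SSet

/-- A morphism of simplicial sets has the right lifting property with
respect to every monomorphism if and only if it has the right lifting property with respect
to every boundary inclusion `∂Δ[n] ⟶ Δ[n]`. -/
theorem rlp_monomorphisms_iff_rlp_boundaryInclusions
    {X Y : SSet} (p : X ⟶ Y) :
    (∀ {A B : SSet} (i : A ⟶ B) [Mono i], HasLiftingProperty i p) ↔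
      (∀ n : ℕ, HasLiftingProperty (boundary n).ι p) := by
  constructor
  · intro H n
    have hm : ∀ m, Mono ((boundary n).ι.app m) := by
      intro m
      rw [CategoryTheory.mono_iff_injective]
      intro α β h
      exact Subtype.ext h
    have : Mono (boundary n).ι := @NatTrans.mono_of_mono_app _ _ _ _ _ _ _ hm
    exact H _
  · intro H A B i _
    exact RLPAux.key i p H
end

section
/- Let I be a type, A : I → Type a family, B : ∀ i, A i → Type a doubly-indexed family, and s : ∀ i (a : A i), B i a → I. Consider the endofunctor F on the product category of I-indexed families of types given on objects by (F X) i = Σ (a : A i), ∀ (b : B i a), X (s i a b), with the evident action on morphisms. Then the category of F-algebras has an initial object (the indexed inductive type W_{I,A,B,s}); i.e., there exists an I-indexed family W together with an algebra structure sup : ∀ i, (Σ (a : A i), ∀ b, W (s i a b)) → W i such that for every F-algebra there is a unique algebra morphism from (W, sup) to it. -/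
open CategoryTheory

universe u

/-- The indexed polynomial endofunctor `⟦I, A, B, s⟧` on the category of `I`-indexed
families of types, sending a family `X` to the family
`i ↦ Σ (a : A i), ∀ (b : B i a), X (s i a b)`. -/
def polynomialEndofunctor {I : Type u} (A : I → Type u) (B : ∀ i, A i → Type u)
    (s : ∀ i (a : A i), B i a → I) :
    (∀ _ : I, Type u) ⥤ (∀ _ : I, Type u) where
  obj X i := Σ a : A i, ∀ b : B i a, X (s i a b)
  map f i := TypeCat.ofHom fun x => ⟨x.1, fun b => f (s i x.1 b) (x.2 b)⟩

/-- The indexed W-type `W_{I,A,B,s}`. -/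
inductive IW {I : Type u} (A : I → Type u) (B : ∀ i, A i → Type u)
    (s : ∀ i (a : A i), B i a → I) : I → Type u where
  | sup (i : I) (a : A i) (f : ∀ b : B i a, IW A B s (s i a b)) : IW A B s i

/-- The `IW` family as an algebra for the polynomial endofunctor. -/
def IWAlgebra {I : Type u} (A : I → Type u) (B : ∀ i, A i → Type u)
    (s : ∀ i (a : A i), B i a → I) :
    Endofunctor.Algebra (polynomialEndofunctor A B s) where
  a := IW A B s
  str := fun i => TypeCat.ofHom fun (x : Σ a : A i, ∀ b : B i a, IW A B s (s i a b)) => IW.sup i x.1 x.2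

/-- Recursion into any algebra. -/
def IWrec {I : Type u} {A : I → Type u} {B : ∀ i, A i → Type u}
    {s : ∀ i (a : A i), B i a → I}
    (X : Endofunctor.Algebra (polynomialEndofunctor A B s)) :
    ∀ i, IW A B s i → X.a i
  | _, IW.sup i a f => X.str i (Sigma.mk a fun b => IWrec X (s i a b) (f b))

theorem IWrec_unique {I : Type u} {A : I → Type u} {B : ∀ i, A i → Type u}
    {s : ∀ i (a : A i), B i a → I}
    (X : Endofunctor.Algebra (polynomialEndofunctor A B s))
    (g : IWAlgebra A B s ⟶ X) : ∀ i w, g.f i w = IWrec X i w := by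
  intro i w
  induction w with
  | sup i a f ih =>
    have h1 : g.f i (IW.sup i a f) = X.str i (Sigma.mk a fun b => g.f (s i a b) (f b)) :=
      (ConcreteCategory.congr_hom (congrFun g.h i) (Sigma.mk a f :
        (polynomialEndofunctor A B s).obj (IW A B s) i)).symm
    rw [h1]
    show X.str i (Sigma.mk a fun b => g.f (s i a b) (f b)) = X.str i (Sigma.mk a fun b => IWrec X (s i a b) (f b))
    have : (fun b => g.f (s i a b) (f b)) = fun b => IWrec X (s i a b) (f b) :=
      funext fun b => ih b
    rw [this]

/-- The category of algebras for the indexed polynomial endofunctor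
`⟦I, A, B, s⟧` has an initial object: the indexed inductive type `W_{I,A,B,s}` together with
its constructor `sup`, from which there is a unique algebra morphism to any other algebra. -/
theorem polynomialEndofunctor_hasInitialAlgebra
    {I : Type u} (A : I → Type u) (B : ∀ i, A i → Type u)
    (s : ∀ i (a : A i), B i a → I) :
    Limits.HasInitial (Endofunctor.Algebra (polynomialEndofunctor A B s)) := by
  have : ∀ X : Endofunctor.Algebra (polynomialEndofunctor A B s),
      Unique (IWAlgebra A B s ⟶ X) := by
    intro X
    refine ⟨⟨{ f := fun i => TypeCat.ofHom fun w => IWrec X i w, h := ?_ }⟩, fun g => ?_⟩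
    · funext i
      ext x
      rfl
    · ext i w
      exact IWrec_unique X g i w
  exact Limits.hasInitial_of_unique (IWAlgebra A B s)
end
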